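/- Greedy decreasing subword in a shifted lattice word reaches 1: if w is a shifted lattice word with maximum letter M, then the greedy procedure—starting from the (unique) occurrence of M and repeatedly choosing the first occurrence of the next smaller value to the right—successfully finds occurrences of M−1, M−2, ..., 1; that is, for each 1 ≤ v < M, after the selected occurrence of v+1 there is an occurrence of v later in the word. -/

import Mathlib

def ShiftedLattice (w : List ℕ) : Prop :=
  ∀ s : List ℕ, s <:+ w → ∀ i : ℕ, 1 ≤ i →
    s.count (i + 1) ≤ s.count i ∧ s.count i ≤ s.count (i + 1) + 1

/-- The greedy decreasing subword in a shifted lattice word reaches 1: if the greedy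
selection (starting at the occurrence of the maximum letter `M`, each step picking the
leftmost occurrence of the next smaller value to the right) has been carried out down to
the value `v + 1`, then there is an occurrence of `v` strictly to the right of the
selected occurrence of `v + 1`. -/
theorem greedy_reaches_one (w : List ℕ) (hpos : ∀ x ∈ w, 1 ≤ x)
    (h : ShiftedLattice w)
    (M : ℕ) (hM : M ∈ w) (hmax : ∀ x ∈ w, x ≤ M)
    (v : ℕ) (hv1 : 1 ≤ v) (hvM : v < M)
    (idx : ℕ → ℕ)
    (hidxM : w[idx M]? = some M)
    (hstep : ∀ u : ℕ, v + 1 ≤ u → u < M →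
      idx (u + 1) < idx u ∧ w[idx u]? = some u ∧
        ∀ q : ℕ, idx (u + 1) < q → q < idx u → w[q]? ≠ some u) :
    ∃ p : ℕ, idx (v + 1) < p ∧ w[p]? = some v := by
  have hvidx : w[idx (v + 1)]? = some (v + 1) := by
    rcases eq_or_lt_of_le (Nat.succ_le_of_lt hvM) with hEq | hLt
    · have : v + 1 = M := hEq; rw [this]; exact hidxM
    · exact (hstep (v + 1) le_rfl hLt).2.1
  set k := idx (v + 1) with hk
  set s := w.drop k with hs
  have hsfx : s <:+ w := List.drop_suffix k w
  have hs0 : s[0]? = some (v + 1) := by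
    rw [hs, List.getElem?_drop]; simpa using hvidx
  have hmem : (v + 1) ∈ s := by
    have hlen : 0 < s.length := by
      by_contra hle
      simp only [not_lt, Nat.le_zero] at hle
      rw [List.getElem?_eq_none (by omega)] at hs0
      cases hs0
    have : s[0] = v + 1 := by
      have := List.getElem?_eq_getElem hlen
      rw [this] at hs0
      exact Option.some.inj hs0
    exact this ▸ List.getElem_mem hlen
  have hc1 : 1 ≤ s.count (v + 1) := List.count_pos_iff.mpr hmem
  have hc2 : 1 ≤ s.count v := le_trans hc1 (h s hsfx v hv1).1
  have hmemv : v ∈ s := List.count_pos_iff.mp hc2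
  obtain ⟨j, hj, hjv⟩ := List.getElem_of_mem hmemv
  have hj0 : j ≠ 0 := by
    intro h0
    subst h0
    rw [List.getElem?_eq_getElem hj, hjv] at hs0
    exact absurd (Option.some.inj hs0) (by omega)
  refine ⟨k + j, by omega, ?_⟩
  rw [← List.getElem?_drop, ← hs, List.getElem?_eq_getElem hj, hjv]
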